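/- arXiv:1606.08950 — 3 statements merged into one kernel-verified Lean document; each statement's English description precedes it below -/
import Mathlib

section
/- Let M be a positive integer, Φ > 0 a real number, and let w and w̃ be nonzero vectors in ℂ^M. Then log(1 − e^{−Φ‖w‖²}) ≤ Φ·e^{−Φ‖w̃‖²}·‖w‖²/(1 − e^{−Φ‖w̃‖²}) + φ(w̃), where φ(w̃) = −Φ·e^{−Φ‖w̃‖²}·‖w̃‖²/(1 − e^{−Φ‖w̃‖²}) + log(1 − e^{−Φ‖w̃‖²}); equality holds if and only if ‖w‖ = ‖w̃‖. (This is the convex upper bound (26) of the paper.) -/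
lemma tangent_aux (x y : ℝ) (hx : 0 < x) (hy : 0 < y) (hxy : x ≠ y) :
    Real.log (1 - Real.exp (-x)) <
      Real.exp (-y) / (1 - Real.exp (-y)) * (x - y) + Real.log (1 - Real.exp (-y)) := by
  set a := Real.exp (-x) with hadef
  set b := Real.exp (-y) with hbdef
  have ha : 0 < a := Real.exp_pos _
  have hb : 0 < b := Real.exp_pos _
  have ha1 : a < 1 := Real.exp_lt_one_iff.mpr (by linarith)
  have hb1 : b < 1 := Real.exp_lt_one_iff.mpr (by linarith)
  have h1a : 0 < 1 - a := by linarith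
  have h1b : 0 < 1 - b := by linarith
  have hab : a ≠ b := by
    intro h
    exact hxy (neg_injective (Real.exp_injective (by rw [← hadef, ← hbdef, h])))
  -- step 2 (strict): log((1-a)/(1-b)) < (1-a)/(1-b) - 1
  have h2 : Real.log ((1 - a) / (1 - b)) < (1 - a) / (1 - b) - 1 := by
    apply Real.log_lt_sub_one_of_pos (by positivity)
    intro h
    have : 1 - a = 1 - b := by
      field_simp at h; linarith
    exact hab (by linarith)
  have hlog : Real.log ((1 - a) / (1 - b)) = Real.log (1 - a) - Real.log (1 - b) :=
    Real.log_div (by linarith) (by linarith)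
  -- step 3 : b - a ≤ b * (x - y)
  have h3 : b - a ≤ b * (x - y) := by
    have hlogab : Real.log (a / b) ≤ a / b - 1 := Real.log_le_sub_one_of_pos (by positivity)
    have hla : Real.log a = -x := Real.log_exp _
    have hlb : Real.log b = -y := Real.log_exp _
    have : Real.log (a / b) = y - x := by
      rw [Real.log_div ha.ne' hb.ne', hla, hlb]; ring
    rw [this] at hlogab
    have := mul_le_mul_of_nonneg_left hlogab hb.le
    have hba : b * (a / b - 1) = a - b := by field_simp
    nlinarith
  have h2' : Real.log (1 - a) - Real.log (1 - b) < (b - a) / (1 - b) := by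
    rw [← hlog]
    have : (1 - a) / (1 - b) - 1 = (b - a) / (1 - b) := by field_simp; ring
    linarith [h2, this ▸ h2]
  have h3' : (b - a) / (1 - b) ≤ b / (1 - b) * (x - y) := by
    rw [div_le_iff₀ h1b] at *
    have : b / (1 - b) * (x - y) * (1 - b) = b * (x - y) := by field_simp
    linarith [this]
  linarith

lemma tangent_le (x y : ℝ) (hx : 0 < x) (hy : 0 < y) :
    Real.log (1 - Real.exp (-x)) ≤
      Real.exp (-y) / (1 - Real.exp (-y)) * (x - y) + Real.log (1 - Real.exp (-y)) := by
  by_cases h : x = y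
  · subst h; simp
  · exact (tangent_aux x y hx hy h).le

/-- Convex upper bound (26): for nonzero `w, w̃ ∈ ℂ^M` and `Φ > 0`,
`log(1 − e^{−Φ‖w‖²}) ≤ Φ·e^{−Φ‖w̃‖²}·‖w‖²/(1 − e^{−Φ‖w̃‖²}) + φ(w̃)`, where
`φ(w̃) = −Φ·e^{−Φ‖w̃‖²}·‖w̃‖²/(1 − e^{−Φ‖w̃‖²}) + log(1 − e^{−Φ‖w̃‖²})`;
equality holds iff `‖w‖ = ‖w̃‖`. -/
theorem stmt_7 (M : ℕ) (hM : 0 < M) (Φ : ℝ) (hΦ : 0 < Φ)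
    (w wt : EuclideanSpace ℂ (Fin M)) (hw : w ≠ 0) (hwt : wt ≠ 0) :
    Real.log (1 - Real.exp (-(Φ * ‖w‖ ^ 2))) ≤
        Φ * Real.exp (-(Φ * ‖wt‖ ^ 2)) * ‖w‖ ^ 2 / (1 - Real.exp (-(Φ * ‖wt‖ ^ 2))) +
          (-(Φ * Real.exp (-(Φ * ‖wt‖ ^ 2)) * ‖wt‖ ^ 2 / (1 - Real.exp (-(Φ * ‖wt‖ ^ 2)))) +
            Real.log (1 - Real.exp (-(Φ * ‖wt‖ ^ 2)))) ∧
      (Real.log (1 - Real.exp (-(Φ * ‖w‖ ^ 2))) =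
          Φ * Real.exp (-(Φ * ‖wt‖ ^ 2)) * ‖w‖ ^ 2 / (1 - Real.exp (-(Φ * ‖wt‖ ^ 2))) +
            (-(Φ * Real.exp (-(Φ * ‖wt‖ ^ 2)) * ‖wt‖ ^ 2 / (1 - Real.exp (-(Φ * ‖wt‖ ^ 2)))) +
              Real.log (1 - Real.exp (-(Φ * ‖wt‖ ^ 2)))) ↔ ‖w‖ = ‖wt‖) := by
  have hnw : 0 < ‖w‖ := norm_pos_iff.mpr hw
  have hnwt : 0 < ‖wt‖ := norm_pos_iff.mpr hwt
  set x := Φ * ‖w‖ ^ 2 with hxdef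
  set y := Φ * ‖wt‖ ^ 2 with hydef
  have hx : 0 < x := by positivity
  have hy : 0 < y := by positivity
  have hb1 : Real.exp (-y) < 1 := Real.exp_lt_one_iff.mpr (by linarith)
  have h1b : (1 : ℝ) - Real.exp (-y) ≠ 0 := by linarith
  have hrhs : Φ * Real.exp (-y) * ‖w‖ ^ 2 / (1 - Real.exp (-y)) +
      (-(Φ * Real.exp (-y) * ‖wt‖ ^ 2 / (1 - Real.exp (-y))) + Real.log (1 - Real.exp (-y))) =
      Real.exp (-y) / (1 - Real.exp (-y)) * (x - y) + Real.log (1 - Real.exp (-y)) := by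
    rw [hxdef, hydef]; field_simp; ring
  have hiffxy : x = y ↔ ‖w‖ = ‖wt‖ := by
    rw [hxdef, hydef]
    constructor
    · intro h
      have h2 : ‖w‖ ^ 2 = ‖wt‖ ^ 2 := mul_left_cancel₀ hΦ.ne' h
      nlinarith
    · intro h; rw [h]
  refine ⟨hrhs ▸ tangent_le x y hx hy, ?_⟩
  rw [hrhs, ← hiffxy]
  constructor
  · intro h
    by_contra hne
    exact absurd h (ne_of_lt (tangent_aux x y hx hy hne))
  · intro h; rw [h]; simp
end

section
/- Let n be a positive integer. The function X ↦ log(det X) is concave on the convex set of n×n Hermitian positive definite complex matrices; that is, for Hermitian positive definite X, Y and real t ∈ [0,1], log det(t·X + (1−t)·Y) ≥ t·log det X + (1−t)·log det Y. -/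
open scoped ComplexOrder

open Matrix Finset

open scoped MatrixOrder

/-- `Bᴴ A B` is positive definite when `A` is and `B` is invertible. -/
lemma aux_posDef_conj {m : Type*} [Fintype m] [DecidableEq m]
    {A B : Matrix m m ℂ} (hA : A.PosDef) (hB : IsUnit B.det) :
    (Bᴴ * A * B).PosDef := by
  refine Matrix.PosDef.of_dotProduct_mulVec_pos (Matrix.isHermitian_conjTranspose_mul_mul B hA.1) fun x hx => ?_
  have hBx : B *ᵥ x ≠ 0 := by
    intro h
    apply hx
    have hinj := Matrix.mulVec_injective_iff_isUnit.2 ((Matrix.isUnit_iff_isUnit_det B).mpr hB)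
      (a₁ := x) (a₂ := 0)
    simp only [Matrix.mulVec_zero] at hinj
    exact hinj h
  simpa only [star_mulVec, Matrix.dotProduct_mulVec, Matrix.vecMul_vecMul]
    using hA.dotProduct_mulVec_pos hBx

/-- Pointwise concavity of `log`. -/
lemma aux_log_concave {t μ : ℝ} (ht0 : 0 ≤ t) (ht1 : t ≤ 1) (hμ : 0 < μ) :
    (1 - t) * Real.log μ ≤ Real.log (t + (1 - t) * μ) := by
  have h := strictConcaveOn_log_Ioi.concaveOn.2 (Set.mem_Ioi.2 one_pos)
    (Set.mem_Ioi.2 hμ) ht0 (sub_nonneg.mpr ht1) (by ring)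
  simpa [Real.log_one, smul_eq_mul] using h

/-- Concavity of `log det` on Hermitian positive definite complex matrices: for
positive definite `X, Y` and `t ∈ [0,1]`,
`log det(t·X + (1−t)·Y) ≥ t·log det X + (1−t)·log det Y`. -/
theorem stmt_8 (n : ℕ) (hn : 0 < n) (X Y : Matrix (Fin n) (Fin n) ℂ)
    (hX : X.PosDef) (hY : Y.PosDef) (t : ℝ) (ht0 : 0 ≤ t) (ht1 : t ≤ 1) :
    Real.log (((t : ℂ) • X + ((1 - t : ℝ) : ℂ) • Y).det.re) ≥
      t * Real.log (X.det.re) + (1 - t) * Real.log (Y.det.re) := by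
  classical
  set S : Matrix (Fin n) (Fin n) ℂ := CFC.sqrt X with hS
  have hSps : S.PosSemidef := (CFC.sqrt_nonneg X).posSemidef
  have hSS : S * S = X := CFC.sqrt_mul_sqrt_self X hX.posSemidef.nonneg
  -- S is invertible
  have hdetS : IsUnit S.det := by
    have : S.det * S.det = X.det := by rw [← Matrix.det_mul, hSS]
    have hXd : X.det ≠ 0 := ne_of_gt hX.det_pos
    exact isUnit_iff_ne_zero.2 (fun h => hXd (by rw [← this, h, mul_zero]))
  have hSinv : S * S⁻¹ = 1 := Matrix.mul_nonsing_inv S hdetS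
  have hinvS : S⁻¹ * S = 1 := Matrix.nonsing_inv_mul S hdetS
  have hSinvH : S⁻¹ᴴ = S⁻¹ := (hSps.inv).isHermitian
  have hdetSinv : IsUnit (S⁻¹).det := S.isUnit_nonsing_inv_det hdetS
  set M : Matrix (Fin n) (Fin n) ℂ := S⁻¹ * Y * S⁻¹ with hM
  have hYSM : S * M * S = Y := by
    calc S * (S⁻¹ * Y * S⁻¹) * S = (S * S⁻¹) * Y * (S⁻¹ * S) := by noncomm_ring
      _ = Y := by rw [hSinv, hinvS, one_mul, mul_one]
  have hMpd : M.PosDef := by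
    have := aux_posDef_conj hY hdetSinv
    rwa [hSinvH] at this
  have hMh : M.IsHermitian := hMpd.isHermitian
  -- eigenvalues of M
  set μ : Fin n → ℝ := hMh.eigenvalues with hμdef
  have hμpos : ∀ i, 0 < μ i := fun i => hMpd.eigenvalues_pos i
  set N : Matrix (Fin n) (Fin n) ℂ := (t : ℂ) • 1 + ((1 - t : ℝ) : ℂ) • M with hN
  -- Z = S * N * S
  have hZ : (t : ℂ) • X + ((1 - t : ℝ) : ℂ) • Y = S * N * S := by
    rw [hN, Matrix.mul_add, Matrix.add_mul, Matrix.mul_smul, Matrix.mul_smul,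
      Matrix.smul_mul, Matrix.smul_mul, mul_one, hSS, hM]
    congr 2
    exact hYSM.symm
  -- determinant of N via spectral theorem
  have hUspec := hMh.spectral_theorem
  rw [Unitary.conjStarAlgAut_apply] at hUspec
  set U : Matrix (Fin n) (Fin n) ℂ := (hMh.eigenvectorUnitary : Matrix (Fin n) (Fin n) ℂ) with hU
  have hUU : U * star U = 1 := Matrix.mem_unitaryGroup_iff.mp hMh.eigenvectorUnitary.2
  have hNdiag : N = U * ((t : ℂ) • 1 + ((1 - t : ℝ) : ℂ) •
      Matrix.diagonal (RCLike.ofReal ∘ μ)) * star U := by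
    rw [Matrix.mul_add, Matrix.add_mul, Matrix.mul_smul, Matrix.mul_smul,
      Matrix.smul_mul, Matrix.smul_mul, mul_one, hUU, ← hUspec, hN]
  have hdiag : (t : ℂ) • (1 : Matrix (Fin n) (Fin n) ℂ) + ((1 - t : ℝ) : ℂ) •
      Matrix.diagonal (RCLike.ofReal ∘ μ)
      = Matrix.diagonal (fun i => ((t + (1 - t) * μ i : ℝ) : ℂ)) := by
    ext i j
    rcases eq_or_ne i j with rfl | hij
    · simp only [Matrix.add_apply, Matrix.smul_apply, Matrix.one_apply_eq,
        Matrix.diagonal_apply_eq, Function.comp_apply, smul_eq_mul, mul_one,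
        Complex.coe_algebraMap]
      push_cast
      ring
    · simp [Matrix.one_apply_ne hij, Matrix.diagonal_apply_ne _ hij]
  have hdetU : U.det * (star U).det = 1 := by
    rw [← Matrix.det_mul, hUU, Matrix.det_one]
  have hdetN : N.det = ((∏ i, (t + (1 - t) * μ i) : ℝ) : ℂ) := by
    rw [hNdiag, hdiag, Matrix.det_mul, Matrix.det_mul, mul_right_comm, hdetU,
      one_mul, Matrix.det_diagonal]
    push_cast
    ring
  -- determinants as reals
  have hdetZ : ((t : ℂ) • X + ((1 - t : ℝ) : ℂ) • Y).det
      = X.det * ((∏ i, (t + (1 - t) * μ i) : ℝ) : ℂ) := by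
    rw [hZ, Matrix.det_mul, Matrix.det_mul, mul_right_comm, ← Matrix.det_mul, hSS,
      hdetN]
  have hdetM : M.det = ((∏ i, μ i : ℝ) : ℂ) := by
    rw [hMh.det_eq_prod_eigenvalues]
    push_cast
    rfl
  have hdetY : Y.det = X.det * ((∏ i, μ i : ℝ) : ℂ) := by
    rw [← hYSM, Matrix.det_mul, Matrix.det_mul, mul_right_comm, ← Matrix.det_mul, hSS,
      hdetM]
  -- X.det is a positive real
  have hXpos : (0 : ℂ) < X.det := hX.det_pos
  obtain ⟨hXre, hXim⟩ := Complex.lt_def.mp hXpos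
  simp only [Complex.zero_re, Complex.zero_im] at hXre hXim
  set dX : ℝ := X.det.re with hdX
  have hXdet : X.det = (dX : ℂ) := Complex.ext rfl hXim.symm
  have hcomb_pos : ∀ i : Fin n, 0 < t + (1 - t) * μ i := by
    intro i
    rcases eq_or_lt_of_le ht0 with h | h
    · rw [← h]
      simpa using hμpos i
    · nlinarith [mul_nonneg (sub_nonneg.mpr ht1) (hμpos i).le]
  have hP1pos : 0 < ∏ i, (t + (1 - t) * μ i) := Finset.prod_pos fun i _ => hcomb_pos i
  have hP0pos : 0 < ∏ i, μ i := Finset.prod_pos fun i _ => hμpos i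
  have hZre : ((t : ℂ) • X + ((1 - t : ℝ) : ℂ) • Y).det.re
      = dX * ∏ i, (t + (1 - t) * μ i) := by
    rw [hdetZ, hXdet, ← Complex.ofReal_mul, Complex.ofReal_re]
  have hYre : Y.det.re = dX * ∏ i, μ i := by
    rw [hdetY, hXdet, ← Complex.ofReal_mul, Complex.ofReal_re]
  rw [hZre, hYre, Real.log_mul (ne_of_gt hXre) (ne_of_gt hP1pos),
    Real.log_mul (ne_of_gt hXre) (ne_of_gt hP0pos),
    Real.log_prod (fun i _ => ne_of_gt (hcomb_pos i)),
    Real.log_prod (fun i _ => ne_of_gt (hμpos i))]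
  have hsum : ∑ i, (1 - t) * Real.log (μ i) ≤ ∑ i, Real.log (t + (1 - t) * μ i) :=
    Finset.sum_le_sum fun i _ => aux_log_concave ht0 ht1 (hμpos i)
  rw [ge_iff_le]
  have hrw : t * Real.log dX + (1 - t) * (Real.log dX + ∑ i, Real.log (μ i))
      = Real.log dX + (1 - t) * ∑ i, Real.log (μ i) := by ring
  rw [hrw]
  refine add_le_add (le_refl _) ?_
  rw [Finset.mul_sum]
  exact hsum
end

section
/- Let n be a positive integer and let X and X̃ be n×n Hermitian positive definite complex matrices. Then log det X = log det X̃ + Re(tr(X̃⁻¹·(X − X̃))) if and only if X = X̃. (Equality condition of the tangent bound (38).) -/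
open scoped ComplexOrder

open Matrix

lemma aux_posdef_conj {m : ℕ} {A B : Matrix (Fin m) (Fin m) ℂ} (hA : A.PosDef)
    (hB : B.det ≠ 0) : (Bᴴ * A * B).PosDef := by
  exact hA.conjTranspose_mul_mul_same
    (Matrix.mulVec_injective_iff_isUnit.mpr ((Matrix.isUnit_iff_isUnit_det B).mpr
      (isUnit_iff_ne_zero.mpr hB)))

lemma aux_key {m : ℕ} (M : Matrix (Fin m) (Fin m) ℂ) (hM : M.PosDef) :
    Real.log (M.det.re) = M.trace.re - m ↔ M = 1 := by
  have hH := hM.isHermitian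
  set μ := hH.eigenvalues with hμ
  have hμpos : ∀ i, 0 < μ i := fun i => hM.eigenvalues_pos i
  have hdet : M.det = ((∏ i, μ i : ℝ) : ℂ) := by
    rw [hH.det_eq_prod_eigenvalues]; push_cast; rfl
  have htr : M.trace = ((∑ i, μ i : ℝ) : ℂ) := by
    conv_lhs => rw [hH.spectral_theorem, Unitary.conjStarAlgAut_apply]
    rw [Matrix.trace_mul_cycle, (Matrix.mem_unitaryGroup_iff').mp (hH.eigenvectorUnitary).2,
      one_mul, Matrix.trace_diagonal]
    push_cast; rfl
  have hlog : Real.log (M.det.re) = ∑ i, Real.log (μ i) := by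
    rw [hdet, Complex.ofReal_re, Real.log_prod]
    exact fun i _ => (hμpos i).ne'
  have htrre : M.trace.re = ∑ i, μ i := by rw [htr, Complex.ofReal_re]
  constructor
  · intro h
    rw [hlog, htrre] at h
    have hall : ∀ i, μ i = 1 := by
      by_contra hc
      push_neg at hc
      obtain ⟨j, hj⟩ := hc
      have hlt : ∑ i, Real.log (μ i) < ∑ i, (μ i - 1) := by
        refine Finset.sum_lt_sum (fun i _ => Real.log_le_sub_one_of_pos (hμpos i))
          ⟨j, Finset.mem_univ j, Real.log_lt_sub_one_of_pos (hμpos j) hj⟩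
      rw [Finset.sum_sub_distrib, Finset.sum_const, Finset.card_univ, Fintype.card_fin,
        nsmul_eq_mul, mul_one] at hlt
      linarith
    have : Matrix.diagonal ((Complex.ofReal) ∘ μ) = 1 := by
      rw [show ((Complex.ofReal) ∘ μ : Fin m → ℂ) = fun _ => (1 : ℂ) from funext fun i => by
        simp [hall i]]
      exact Matrix.diagonal_one
    conv_lhs => rw [hH.spectral_theorem, Unitary.conjStarAlgAut_apply]
    rw [show (RCLike.ofReal ∘ μ : Fin m → ℂ) = (Complex.ofReal) ∘ μ from rfl, this, mul_one,
      (Matrix.mem_unitaryGroup_iff).mp (hH.eigenvectorUnitary).2]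
  · rintro rfl
    simp [Matrix.trace_one, sub_self]

/-- Equality condition of the tangent bound (38): for Hermitian positive definite `X, X̃`,
`log det X = log det X̃ + Re(tr(X̃⁻¹·(X − X̃)))` iff `X = X̃`. -/
theorem stmt_10 (n : ℕ) (hn : 0 < n) (X Xt : Matrix (Fin n) (Fin n) ℂ)
    (hX : X.PosDef) (hXt : Xt.PosDef) :
    Real.log (X.det.re) = Real.log (Xt.det.re) + ((Xt⁻¹ * (X - Xt)).trace).re ↔ X = Xt := by
  classical
  set S := (open scoped MatrixOrder in CFC.sqrt Xt) with hSdef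
  have hS : S.PosSemidef := by
    open scoped MatrixOrder in exact Matrix.nonneg_iff_posSemidef.mp (CFC.sqrt_nonneg Xt)
  have hSS : S * S = Xt := by
    open scoped MatrixOrder in
    exact CFC.sqrt_mul_sqrt_self Xt (Matrix.nonneg_iff_posSemidef.mpr hXt.posSemidef)
  have hXtdet : Xt.det ≠ 0 := hXt.det_pos.ne'
  have hSdet : S.det ≠ 0 := by
    intro h
    apply hXtdet
    rw [← hSS, Matrix.det_mul, h, mul_zero]
  have hSH : S.IsHermitian := hS.1
  have hSinvH : S⁻¹.IsHermitian := hSH.inv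
  set M := S⁻¹ * X * S⁻¹ with hMdef
  have hM : M.PosDef := by
    have := aux_posdef_conj (B := S⁻¹) hX (by simp [Matrix.det_nonsing_inv, hSdet])
    rwa [hSinvH.eq] at this
  -- Xt⁻¹ = S⁻¹ * S⁻¹
  have hXtinv : Xt⁻¹ = S⁻¹ * S⁻¹ := by rw [← hSS, Matrix.mul_inv_rev]
  -- trace identity
  have htr : (Xt⁻¹ * (X - Xt)).trace = M.trace - n := by
    have h1 : (Xt⁻¹ * X).trace = M.trace := by
      rw [hXtinv, Matrix.mul_assoc, Matrix.trace_mul_comm, hMdef, Matrix.mul_assoc]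
    rw [Matrix.mul_sub, Matrix.trace_sub, Matrix.nonsing_inv_mul Xt
      (isUnit_iff_ne_zero.mpr hXtdet), Matrix.trace_one, h1]
    simp
  -- determinant identity
  have hdetM : M.det = X.det / Xt.det := by
    rw [hMdef, Matrix.det_mul, Matrix.det_mul, Matrix.det_nonsing_inv, ← hSS, Matrix.det_mul, Ring.inverse_eq_inv']
    field_simp
  have hXre : 0 < X.det.re := (Complex.pos_iff.mp hX.det_pos).1
  have hXtre : 0 < Xt.det.re := (Complex.pos_iff.mp hXt.det_pos).1
  have hXim : X.det.im = 0 := (Complex.pos_iff.mp hX.det_pos).2.symm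
  have hXtim : Xt.det.im = 0 := (Complex.pos_iff.mp hXt.det_pos).2.symm
  have hXc : X.det = (X.det.re : ℂ) := Complex.ext rfl (by simp [hXim])
  have hXtc : Xt.det = (Xt.det.re : ℂ) := Complex.ext rfl (by simp [hXtim])
  have hdetMre : M.det.re = X.det.re / Xt.det.re := by
    rw [hdetM, hXc, hXtc, ← Complex.ofReal_div, Complex.ofReal_re]
    simp
  -- M = 1 ↔ X = Xt
  have hM1 : M = 1 ↔ X = Xt := by
    constructor
    · intro h
      have : S * M * S = S * 1 * S := by rw [h]
      rw [hMdef, mul_one, hSS] at this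
      have hSX : S * (S⁻¹ * X * S⁻¹) * S = X := by
        rw [← Matrix.mul_assoc, ← Matrix.mul_assoc, Matrix.mul_nonsing_inv S
          (isUnit_iff_ne_zero.mpr hSdet), one_mul, Matrix.mul_assoc,
          Matrix.nonsing_inv_mul S (isUnit_iff_ne_zero.mpr hSdet), mul_one]
      rwa [hSX] at this
    · intro h
      have hSu := isUnit_iff_ne_zero.mpr hSdet
      rw [hMdef, h, ← hSS, Matrix.mul_assoc, Matrix.mul_assoc, Matrix.mul_nonsing_inv S hSu,
        Matrix.mul_one, Matrix.nonsing_inv_mul S hSu]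
  rw [htr]
  have key := aux_key M hM
  rw [hdetMre, Real.log_div hXre.ne' hXtre.ne'] at key
  constructor
  · intro h
    apply hM1.mp
    apply key.mp
    simp only [Complex.sub_re, Complex.natCast_re] at h
    linarith
  · intro h
    have := key.mpr (hM1.mpr h)
    simp only [Complex.sub_re, Complex.natCast_re]
    linarith
end
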